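/- The map f ↦ ‖f‖_{□^V} is a seminorm on the space of bounded measurable functions on X: for all bounded measurable f, g : X → ℝ and every c ∈ ℝ, ‖c·f‖_{□^V} = |c|·‖f‖_{□^V} and ‖f + g‖_{□^V} ≤ ‖f‖_{□^V} + ‖g‖_{□^V}. -/

import Mathlib

open MeasureTheory

/-- The Gowers box integral `∫_{X⁺} ∏_{ω ∈ {0,1}^V} f(x^ω) dμ⁺`. -/
noncomputable def boxInt {V : Type} [Fintype V] [DecidableEq V]
    (X : V → Type) [∀ v, MeasurableSpace (X v)] (μ : ∀ v, Measure (X v))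
    (f : (∀ v, X v) → ℝ) : ℝ :=
  ∫ x : ∀ p : V × Bool, X p.1,
    ∏ ω : V → Bool, f (fun v => x (v, ω v))
    ∂(Measure.pi fun p : V × Bool => μ p.1)

/-- The Gowers box seminorm `‖f‖_{□^V} = (boxInt f)^{1/2^{|V|}}`. -/
noncomputable def boxNorm {V : Type} [Fintype V] [DecidableEq V]
    (X : V → Type) [∀ v, MeasurableSpace (X v)] (μ : ∀ v, Measure (X v))
    (f : (∀ v, X v) → ℝ) : ℝ :=
  (boxInt X μ f) ^ ((1 : ℝ) / 2 ^ Fintype.card V)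

section Helpers

/-- Integrability of bounded a.e.-strongly-measurable functions on finite measure spaces. -/
lemma integrable_of_bdd {α : Type*} [MeasurableSpace α] {ν : Measure α} [IsFiniteMeasure ν]
    {F : α → ℝ} (hF : AEStronglyMeasurable F ν) {C : ℝ} (h : ∀ a, |F a| ≤ C) :
    Integrable F ν :=
  (integrable_const C).mono' hF (Filter.Eventually.of_forall (by simpa [Real.norm_eq_abs] using h))

/-- Cauchy–Schwarz for integrals of bounded measurable real functions. -/
lemma sq_integral_mul_le {α : Type*} [MeasurableSpace α] (ν : Measure α)
    [IsProbabilityMeasure ν] {F G : α → ℝ}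
    (hF : AEStronglyMeasurable F ν) (hG : AEStronglyMeasurable G ν)
    {CF CG : ℝ} (hbF : ∀ x, |F x| ≤ CF) (hbG : ∀ x, |G x| ≤ CG) :
    (∫ x, F x * G x ∂ν) ^ 2 ≤ (∫ x, F x * F x ∂ν) * (∫ x, G x * G x ∂ν) := by
  have hFG : Integrable (fun x => F x * G x) ν := by
    refine integrable_of_bdd (hF.mul hG) (C := CF * CG) fun x => ?_
    rw [abs_mul]
    exact mul_le_mul (hbF x) (hbG x) (abs_nonneg _) ((abs_nonneg _).trans (hbF x))
  have hFF : Integrable (fun x => F x * F x) ν := by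
    refine integrable_of_bdd (hF.mul hF) (C := CF * CF) fun x => ?_
    rw [abs_mul]
    exact mul_le_mul (hbF x) (hbF x) (abs_nonneg _) ((abs_nonneg _).trans (hbF x))
  have hGG : Integrable (fun x => G x * G x) ν := by
    refine integrable_of_bdd (hG.mul hG) (C := CG * CG) fun x => ?_
    rw [abs_mul]
    exact mul_le_mul (hbG x) (hbG x) (abs_nonneg _) ((abs_nonneg _).trans (hbG x))
  have key : ∀ t : ℝ, 0 ≤ (∫ x, G x * G x ∂ν) * (t * t) + (2 * ∫ x, F x * G x ∂ν) * t
      + ∫ x, F x * F x ∂ν := by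
    intro t
    have h1 : ∀ x, (t * G x + F x) * (t * G x + F x)
        = (G x * G x) * (t * t) + (2 * (F x * G x)) * t + F x * F x := by intro x; ring
    have h2 : 0 ≤ ∫ x, (t * G x + F x) * (t * G x + F x) ∂ν :=
      integral_nonneg fun x => mul_self_nonneg _
    calc (0:ℝ) ≤ ∫ x, (t * G x + F x) * (t * G x + F x) ∂ν := h2
      _ = ∫ x, (G x * G x) * (t * t) + (2 * (F x * G x)) * t + F x * F x ∂ν := by
          simp_rw [h1]
      _ = (∫ x, G x * G x ∂ν) * (t * t) + (2 * ∫ x, F x * G x ∂ν) * t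
          + ∫ x, F x * F x ∂ν := by
          rw [integral_add (f := fun x => (G x * G x) * (t * t) + (2 * (F x * G x)) * t)
              (g := fun x => F x * F x)
              ((hGG.mul_const _).add ((hFG.const_mul 2).mul_const t)) hFF,
            integral_add (f := fun x => (G x * G x) * (t * t))
              (g := fun x => (2 * (F x * G x)) * t)
              (hGG.mul_const _) ((hFG.const_mul 2).mul_const t),
            integral_mul_const, integral_mul_const, MeasureTheory.integral_const_mul]
  have := discrim_le_zero key
  rw [discrim] at this
  nlinarith [this]

end Helpers

section Box

variable {V : Type} [Fintype V] [DecidableEq V]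
variable (X : V → Type) [∀ v, MeasurableSpace (X v)]
variable (μ : ∀ v, Measure (X v)) [∀ v, IsProbabilityMeasure (μ v)]

/-- The multilinear Gowers box integral of a family of functions. -/
noncomputable def boxI (h : (V → Bool) → (∀ v, X v) → ℝ) : ℝ :=
  ∫ x : ∀ p : V × Bool, X p.1,
    ∏ ω : V → Bool, h ω (fun v => x (v, ω v))
    ∂(Measure.pi fun p : V × Bool => μ p.1)

lemma boxInt_eq_boxI (f : (∀ v, X v) → ℝ) : boxInt X μ f = boxI X μ (fun _ => f) := rfl

/-- The point of `X` assembled from one value at `v` and values elsewhere given by `z` along `ω`. -/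
def pointAt (v : V) (a : X v) (z : ∀ q : {q : V × Bool // ¬ q.1 = v}, X q.1.1)
    (ω : V → Bool) : ∀ w, X w :=
  fun w => if h : w = v then cast (congrArg X h.symm) a else z ⟨(w, ω w), h⟩

lemma pointAt_update (v : V) (a : X v) (z : ∀ q : {q : V × Bool // ¬ q.1 = v}, X q.1.1)
    (ω : V → Bool) (b : Bool) :
    pointAt X v a z (Function.update ω v b) = pointAt X v a z ω := by
  funext w
  unfold pointAt
  by_cases h : w = v
  · simp [h]
  · have hup : Function.update ω v b w = ω w := Function.update_of_ne h _ _
    simp only [dif_neg h]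
    congr! 2
    rw [hup]

/-- The half-product over `ω` with `ω v = b`, as a function of the value at `v` and the rest. -/
noncomputable def halfProd (v : V) (h : (V → Bool) → (∀ v, X v) → ℝ) (b : Bool)
    (a : X v) (z : ∀ q : {q : V × Bool // ¬ q.1 = v}, X q.1.1) : ℝ :=
  ∏ ω ∈ Finset.univ.filter (fun ω : V → Bool => ω v = b), h ω (pointAt X v a z ω)

lemma halfProd_comp_update (v : V) (h : (V → Bool) → (∀ v, X v) → ℝ) (b c : Bool)
    (a : X v) (z : ∀ q : {q : V × Bool // ¬ q.1 = v}, X q.1.1) :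
    halfProd X v (fun ω => h (Function.update ω v c)) b a z = halfProd X v h c a z := by
  unfold halfProd
  refine Finset.prod_nbij' (fun ω => Function.update ω v c) (fun ω => Function.update ω v b)
    ?_ ?_ ?_ ?_ ?_
  · intro ω _; simp
  · intro ω _; simp
  · intro ω hω
    simp only [Finset.mem_filter, Finset.mem_univ, true_and] at hω
    simp [Function.update_idem, ← hω, Function.update_eq_self]
  · intro ω hω
    simp only [Finset.mem_filter, Finset.mem_univ, true_and] at hω
    simp [Function.update_idem, ← hω, Function.update_eq_self]
  · intro ω _
    rw [pointAt_update]


section Fixv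

variable (v : V)

/-- `Fin 2` indexes the two coordinates above `v`. -/
def epsEquiv : Fin 2 ≃ {q : V × Bool // q.1 = v} where
  toFun i := ⟨(v, finTwoEquiv i), rfl⟩
  invFun q := finTwoEquiv.symm q.1.2
  left_inv i := by simp
  right_inv q := Subtype.ext (Prod.ext q.2.symm (by simp))

/-- The two coordinates above `v` as a product. -/
noncomputable def twoEquiv : (X v × X v) ≃ᵐ (∀ q : {q : V × Bool // q.1 = v}, X q.1.1) :=
  (MeasurableEquiv.piFinTwo fun _ : Fin 2 => X v).symm.trans
    (MeasurableEquiv.piCongrLeft (fun q : {q : V × Bool // q.1 = v} => X q.1.1) (epsEquiv v))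

lemma twoEquiv_mp : MeasurePreserving (twoEquiv X v) ((μ v).prod (μ v))
    (Measure.pi fun q : {q : V × Bool // q.1 = v} => μ q.1.1) :=
  (measurePreserving_piCongrLeft (fun q : {q : V × Bool // q.1 = v} => μ q.1.1)
    (epsEquiv v)).comp
    ((measurePreserving_piFinTwo (fun _ : Fin 2 => μ v)).symm _)


/-- The key pointwise identity for the split point. -/
lemma split_point_eq (s t : X v) (z : ∀ q : {q : V × Bool // ¬ q.1 = v}, X q.1.1)
    (ω : V → Bool) :
    (fun w => ((MeasurableEquiv.piEquivPiSubtypeProd (fun p : V × Bool => X p.1)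
          (fun p => p.1 = v)).symm (twoEquiv X v (s, t), z)) (w, ω w))
      = pointAt X v (if ω v then t else s) z ω := by
  funext w
  by_cases hw : w = v
  · subst hw
    have hpt : pointAt X w (if ω w then t else s) z ω w = (if ω w then t else s) := by
      simp [pointAt]
    rw [hpt]
    have e1app : ∀ b : Bool, (MeasurableEquiv.piEquivPiSubtypeProd (fun p : V × Bool => X p.1)
        (fun p => p.1 = w)).symm (twoEquiv X w (s, t), z) (w, b)
        = twoEquiv X w (s, t) ⟨(w, b), rfl⟩ := by
      intro b
      simp [MeasurableEquiv.piEquivPiSubtypeProd, Equiv.piEquivPiSubtypeProd]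
    cases hb : ω w
    · rw [e1app]
      show (MeasurableEquiv.piCongrLeft (fun q : {q : V × Bool // q.1 = w} => X q.1.1)
          (epsEquiv w)) ((MeasurableEquiv.piFinTwo fun _ : Fin 2 => X w).symm (s, t))
          (epsEquiv w 0) = _
      rw [MeasurableEquiv.coe_piCongrLeft]; refine (Equiv.piCongrLeft_apply_apply (fun q : {q : V × Bool // q.1 = w} => X q.1.1) (epsEquiv w) _ 0).trans ?_
      simp; rfl
    · rw [e1app]
      show (MeasurableEquiv.piCongrLeft (fun q : {q : V × Bool // q.1 = w} => X q.1.1)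
          (epsEquiv w)) ((MeasurableEquiv.piFinTwo fun _ : Fin 2 => X w).symm (s, t))
          (epsEquiv w 1) = _
      rw [MeasurableEquiv.coe_piCongrLeft]; refine (Equiv.piCongrLeft_apply_apply (fun q : {q : V × Bool // q.1 = w} => X q.1.1) (epsEquiv w) _ 1).trans ?_
      simp; rfl
  · have h1 : ((MeasurableEquiv.piEquivPiSubtypeProd (fun p : V × Bool => X p.1)
        (fun p => p.1 = v)).symm (twoEquiv X v (s, t), z)) (w, ω w) = z ⟨(w, ω w), hw⟩ := by
      simp [MeasurableEquiv.piEquivPiSubtypeProd, Equiv.piEquivPiSubtypeProd, hw]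
    rw [h1]
    simp [pointAt, hw]

lemma boxI_eq (h : (V → Bool) → (∀ v, X v) → ℝ)
    (hm : ∀ ω, Measurable (h ω)) {C : ℝ} (hb : ∀ ω x, |h ω x| ≤ C) :
    boxI X μ h = ∫ z, (∫ s, halfProd X v h false s z ∂(μ v))
        * (∫ t, halfProd X v h true t z ∂(μ v))
      ∂(Measure.pi fun q : {q : V × Bool // ¬ q.1 = v} => μ q.1.1) := by
  classical
  set P : (∀ p : V × Bool, X p.1) → ℝ :=
    fun x => ∏ ω : V → Bool, h ω (fun v => x (v, ω v)) with hP
  have hPm : Measurable P := Finset.measurable_prod _ fun ω _ =>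
    (hm ω).comp (measurable_pi_lambda _ fun w => measurable_pi_apply _)
  have hPb : ∀ x, |P x| ≤ (max C 0) ^ (Fintype.card (V → Bool)) := by
    intro x
    calc |P x| ≤ ∏ _ω : V → Bool, (max C 0) := by
          rw [hP, Finset.abs_prod]
          exact Finset.prod_le_prod (fun _ _ => abs_nonneg _)
            (fun ω _ => (hb ω _).trans (le_max_left _ _))
      _ = _ := by rw [Finset.prod_const, Finset.card_univ]
  have hmp := measurePreserving_piEquivPiSubtypeProd (fun p : V × Bool => μ p.1)
    (fun p : V × Bool => p.1 = v)
  have hmps := hmp.symm (MeasurableEquiv.piEquivPiSubtypeProd (fun p : V × Bool => X p.1)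
    (fun p : V × Bool => p.1 = v))
  have step1 : boxI X μ h = ∫ yz, P ((MeasurableEquiv.piEquivPiSubtypeProd
      (fun p : V × Bool => X p.1) (fun p : V × Bool => p.1 = v)).symm yz)
      ∂((Measure.pi fun q : {q : V × Bool // q.1 = v} => μ q.1.1).prod
        (Measure.pi fun q : {q : V × Bool // ¬ q.1 = v} => μ q.1.1)) :=
    (hmps.integral_comp' P).symm
  have hint : Integrable (fun yz => P ((MeasurableEquiv.piEquivPiSubtypeProd
      (fun p : V × Bool => X p.1) (fun p : V × Bool => p.1 = v)).symm yz))
      ((Measure.pi fun q : {q : V × Bool // q.1 = v} => μ q.1.1).prod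
        (Measure.pi fun q : {q : V × Bool // ¬ q.1 = v} => μ q.1.1)) :=
    integrable_of_bdd ((hPm.comp (MeasurableEquiv.piEquivPiSubtypeProd
      (fun p : V × Bool => X p.1)
      (fun p : V × Bool => p.1 = v)).symm.measurable).aestronglyMeasurable)
    (fun yz => hPb _)
  rw [step1, integral_prod_symm _ hint]
  refine integral_congr_ae (Filter.Eventually.of_forall fun z => ?_)
  calc (∫ y, P ((MeasurableEquiv.piEquivPiSubtypeProd (fun p : V × Bool => X p.1)
          (fun p : V × Bool => p.1 = v)).symm (y, z))
        ∂(Measure.pi fun q : {q : V × Bool // q.1 = v} => μ q.1.1))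
      = ∫ st : X v × X v, P ((MeasurableEquiv.piEquivPiSubtypeProd (fun p : V × Bool => X p.1)
          (fun p : V × Bool => p.1 = v)).symm (twoEquiv X v st, z)) ∂((μ v).prod (μ v)) :=
        ((twoEquiv_mp X μ v).integral_comp' _).symm
    _ = ∫ st : X v × X v, (halfProd X v h false st.1 z) * (halfProd X v h true st.2 z)
          ∂((μ v).prod (μ v)) := by
        refine integral_congr_ae (Filter.Eventually.of_forall ?_)
        rintro ⟨s, t⟩
        have hfac : ∀ ω : V → Bool, h ω (fun w => ((MeasurableEquiv.piEquivPiSubtypeProd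
            (fun p : V × Bool => X p.1) (fun p : V × Bool => p.1 = v)).symm
              (twoEquiv X v (s, t), z)) (w, ω w))
            = h ω (pointAt X v (if ω v then t else s) z ω) :=
          fun ω => congrArg (h ω) (split_point_eq X v s t z ω)
        show P _ = _
        rw [hP]
        simp only []
        rw [Finset.prod_congr rfl fun ω _ => hfac ω,
          ← Finset.prod_filter_mul_prod_filter_not Finset.univ
            (fun ω : V → Bool => ω v = false)]
        congr 1
        · exact Finset.prod_congr rfl fun ω hω => by
            have hv : ω v = false := (Finset.mem_filter.1 hω).2
            simp [hv]
        · have hflt : Finset.univ.filter (fun ω : V → Bool => ¬ ω v = false)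
              = Finset.univ.filter (fun ω : V → Bool => ω v = true) := by
            ext ω; simp
          rw [hflt]
          exact Finset.prod_congr rfl fun ω hω => by
            have hv : ω v = true := (Finset.mem_filter.1 hω).2
            simp [hv]
    _ = (∫ s, halfProd X v h false s z ∂(μ v)) * (∫ t, halfProd X v h true t z ∂(μ v)) :=
        integral_prod_mul (f := fun s => halfProd X v h false s z)
          (g := fun t => halfProd X v h true t z)

lemma halfProd_measurable (h : (V → Bool) → (∀ v, X v) → ℝ)
    (hm : ∀ ω, Measurable (h ω)) (b : Bool) :
    Measurable (fun zs : ((∀ q : {q : V × Bool // ¬ q.1 = v}, X q.1.1) × X v) =>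
      halfProd X v h b zs.2 zs.1) := by
  refine Finset.measurable_prod _ fun ω _ => (hm ω).comp (measurable_pi_lambda _ fun w => ?_)
  by_cases hw : w = v
  · subst hw
    have heq : (fun zs : ((∀ q : {q : V × Bool // ¬ q.1 = w}, X q.1.1) × X w) =>
        pointAt X w zs.2 zs.1 ω w) = fun zs => zs.2 := by
      funext zs; simp [pointAt]
    rw [heq]; exact measurable_snd
  · have heq : (fun zs : ((∀ q : {q : V × Bool // ¬ q.1 = v}, X q.1.1) × X v) =>
        pointAt X v zs.2 zs.1 ω w) = fun zs => zs.1 ⟨(w, ω w), hw⟩ := by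
      funext zs; simp [pointAt, hw]
    rw [heq]; exact (measurable_pi_apply _).comp measurable_fst

lemma halfProd_abs_le (h : (V → Bool) → (∀ v, X v) → ℝ) {C : ℝ}
    (hb : ∀ ω x, |h ω x| ≤ C) (b : Bool) (a : X v)
    (z : ∀ q : {q : V × Bool // ¬ q.1 = v}, X q.1.1) :
    |halfProd X v h b a z| ≤ (max C 0 + 1) ^ (Fintype.card (V → Bool)) := by
  have h1 : (1:ℝ) ≤ max C 0 + 1 := le_add_of_nonneg_left (le_max_right _ _)
  calc |halfProd X v h b a z|
      ≤ ∏ _ω ∈ Finset.univ.filter (fun ω : V → Bool => ω v = b), (max C 0 + 1) := by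
        rw [halfProd, Finset.abs_prod]
        exact Finset.prod_le_prod (fun _ _ => abs_nonneg _) fun ω _ =>
          ((hb ω _).trans (le_max_left _ _)).trans (by linarith)
    _ = (max C 0 + 1) ^ (Finset.univ.filter (fun ω : V → Bool => ω v = b)).card :=
        Finset.prod_const _
    _ ≤ (max C 0 + 1) ^ (Fintype.card (V → Bool)) := by
        apply pow_le_pow_right₀ h1
        rw [← Finset.card_univ]
        exact Finset.card_filter_le _ _

/-- The basic Cauchy–Schwarz step for the box integral. -/
lemma boxI_sq_le (h : (V → Bool) → (∀ v, X v) → ℝ)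
    (hm : ∀ ω, Measurable (h ω)) {C : ℝ} (hb : ∀ ω x, |h ω x| ≤ C) :
    (boxI X μ h) ^ 2 ≤ boxI X μ (fun ω => h (Function.update ω v false))
      * boxI X μ (fun ω => h (Function.update ω v true)) := by
  classical
  set ν := Measure.pi fun q : {q : V × Bool // ¬ q.1 = v} => μ q.1.1 with hν
  set F := fun z => ∫ s, halfProd X v h false s z ∂(μ v) with hF
  set G := fun z => ∫ t, halfProd X v h true t z ∂(μ v) with hG
  have hmF : AEStronglyMeasurable F ν := by
    refine (StronglyMeasurable.integral_prod_right'
      (f := fun zs => halfProd X v h false zs.2 zs.1) ?_).aestronglyMeasurable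
    exact (halfProd_measurable X v h hm false).stronglyMeasurable
  have hmG : AEStronglyMeasurable G ν := by
    refine (StronglyMeasurable.integral_prod_right'
      (f := fun zs => halfProd X v h true zs.2 zs.1) ?_).aestronglyMeasurable
    exact (halfProd_measurable X v h hm true).stronglyMeasurable
  have hbF : ∀ z, |F z| ≤ (max C 0 + 1) ^ (Fintype.card (V → Bool)) := by
    intro z
    rw [hF]
    have := norm_integral_le_of_norm_le_const (μ := μ v)
      (f := fun s => halfProd X v h false s z)
      (C := (max C 0 + 1) ^ (Fintype.card (V → Bool)))
      (Filter.Eventually.of_forall fun s => by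
        simpa [Real.norm_eq_abs] using halfProd_abs_le X v h hb false s z)
    simpa [Real.norm_eq_abs] using this
  have hbG : ∀ z, |G z| ≤ (max C 0 + 1) ^ (Fintype.card (V → Bool)) := by
    intro z
    rw [hG]
    have := norm_integral_le_of_norm_le_const (μ := μ v)
      (f := fun t => halfProd X v h true t z)
      (C := (max C 0 + 1) ^ (Fintype.card (V → Bool)))
      (Filter.Eventually.of_forall fun t => by
        simpa [Real.norm_eq_abs] using halfProd_abs_le X v h hb true t z)
    simpa [Real.norm_eq_abs] using this
  have e0 : boxI X μ h = ∫ z, F z * G z ∂ν := boxI_eq X μ v h hm hb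
  have e1 : boxI X μ (fun ω => h (Function.update ω v false)) = ∫ z, F z * F z ∂ν := by
    rw [boxI_eq X μ v _ (fun ω => hm _) (fun ω x => hb _ x)]
    simp only [halfProd_comp_update]
    rfl
  have e2 : boxI X μ (fun ω => h (Function.update ω v true)) = ∫ z, G z * G z ∂ν := by
    rw [boxI_eq X μ v _ (fun ω => hm _) (fun ω x => hb _ x)]
    simp only [halfProd_comp_update]
    rfl
  rw [e0, e1, e2]
  exact sq_integral_mul_le ν hmF hmG hbF hbG

/-- Nonnegativity of box integrals of families invariant in direction `v`. -/
lemma boxI_nonneg (h : (V → Bool) → (∀ v, X v) → ℝ)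
    (hm : ∀ ω, Measurable (h ω)) {C : ℝ} (hb : ∀ ω x, |h ω x| ≤ C)
    (hinv : ∀ ω b, h (Function.update ω v b) = h ω) : 0 ≤ boxI X μ h := by
  rw [boxI_eq X μ v h hm hb]
  have hsame : ∀ a z, halfProd X v h true a z = halfProd X v h false a z := by
    intro a z
    have h1 : halfProd X v (fun ω => h (Function.update ω v true)) false a z
        = halfProd X v h true a z := halfProd_comp_update X v h false true a z
    have h2 : (fun ω => h (Function.update ω v true)) = h := funext fun ω => hinv ω true
    rw [h2] at h1
    have h3 : halfProd X v (fun ω => h (Function.update ω v false)) false a z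
        = halfProd X v h false a z := halfProd_comp_update X v h false false a z
    have h4 : (fun ω => h (Function.update ω v false)) = h := funext fun ω => hinv ω false
    rw [h4] at h3
    rw [← h1, h3]
  refine integral_nonneg fun z => ?_
  simp only [hsame]
  exact mul_self_nonneg _

end Fixv

/-- Override `ω` on `S` by `τ`. -/
def ov (S : Finset V) (τ ω : V → Bool) : V → Bool := fun w => if w ∈ S then τ w else ω w

lemma ov_empty (τ ω : V → Bool) : ov (∅ : Finset V) τ ω = ω :=
  funext fun w => if_neg (Finset.notMem_empty w)

lemma ov_univ (τ ω : V → Bool) : ov (Finset.univ : Finset V) τ ω = τ :=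
  funext fun w => if_pos (Finset.mem_univ w)

lemma ov_update (S : Finset V) (a : V) (ha : a ∉ S) (τ ω : V → Bool) (b : Bool) :
    ov S τ (Function.update ω a b) = ov (insert a S) (Function.update τ a b) ω := by
  funext w
  unfold ov
  by_cases hw : w = a
  · subst hw
    simp [ha, Function.update_self]
  · by_cases hS : w ∈ S
    · simp [hS, Finset.mem_insert, hw, Function.update_of_ne hw]
    · have : w ∉ insert a S := by simp [hw, hS]
      simp [hS, this, Function.update_of_ne hw]

lemma ov_indep (S : Finset V) (a : V) (ha : a ∉ S) (σ : {j : V // j ≠ a} → Bool) (b : Bool) :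
    ov S ((Equiv.funSplitAt a Bool).symm (b, σ)) = ov S ((Equiv.funSplitAt a Bool).symm (false, σ)) := by
  funext τ w
  unfold ov
  by_cases hS : w ∈ S
  · have hw : ¬ w = a := fun hc => ha (hc ▸ hS)
    simp [hS, Equiv.funSplitAt, Equiv.piSplitAt, hw]
  · simp [hS]

lemma update_funSplitAt_symm (a : V) (σ : {j : V // j ≠ a} → Bool) (b c : Bool) :
    Function.update ((Equiv.funSplitAt a Bool).symm (b, σ)) a c
      = (Equiv.funSplitAt a Bool).symm (c, σ) := by
  funext w
  by_cases hw : w = a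
  · subst hw
    simp [Function.update_self, Equiv.funSplitAt, Equiv.piSplitAt]
  · simp [Function.update_of_ne hw, Equiv.funSplitAt, Equiv.piSplitAt, hw]

lemma gcs_aux [Nonempty V] (h : (V → Bool) → (∀ v, X v) → ℝ)
    (hm : ∀ ω, Measurable (h ω)) {C : ℝ} (hb : ∀ ω x, |h ω x| ≤ C) (S : Finset V) :
    |boxI X μ h| ^ (Fintype.card (V → Bool))
      ≤ ∏ τ : V → Bool, boxI X μ (fun ω => h (ov S τ ω)) := by
  classical
  induction S using Finset.induction_on with
  | empty =>
    have he : ∀ τ : V → Bool, (fun ω => h (ov (∅ : Finset V) τ ω)) = h :=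
      fun τ => funext fun ω => congrArg h (ov_empty τ ω)
    simp only [he]
    rw [Finset.prod_const, Finset.card_univ]
    have heven : Even (Fintype.card (V → Bool)) := by
      rw [Fintype.card_fun, Fintype.card_bool]
      exact Nat.even_pow.mpr ⟨even_two, Fintype.card_ne_zero⟩
    rw [heven.pow_abs]
  | @insert a S ha IH =>
    refine IH.trans ?_
    set E := Equiv.funSplitAt a Bool with hE
    set E2 := E.trans (Equiv.prodComm Bool ({j : V // j ≠ a} → Bool)) with hE2
    have e1 : ∏ τ : V → Bool, boxI X μ (fun ω => h (ov S τ ω))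
        = ∏ p : ({j : V // j ≠ a} → Bool) × Bool,
            boxI X μ (fun ω => h (ov S (E.symm (p.2, p.1)) ω)) :=
      Fintype.prod_equiv E2 _ _ (fun τ => by rw [hE2]; simp)
    have e2 : ∏ τ : V → Bool, boxI X μ (fun ω => h (ov (insert a S) τ ω))
        = ∏ p : ({j : V // j ≠ a} → Bool) × Bool,
            boxI X μ (fun ω => h (ov (insert a S) (E.symm (p.2, p.1)) ω)) :=
      Fintype.prod_equiv E2 _ _ (fun τ => by rw [hE2]; simp)
    rw [e1, e2, Fintype.prod_prod_type, Fintype.prod_prod_type]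
    have key : ∀ σ : {j : V // j ≠ a} → Bool,
        ∏ b : Bool, boxI X μ (fun ω => h (ov S (E.symm (b, σ)) ω))
          = (boxI X μ (fun ω => h (ov S (E.symm (false, σ)) ω))) ^ 2 := by
      intro σ
      rw [Fintype.prod_bool, ov_indep S a ha σ true, sq]
    have key2 : ∀ σ : {j : V // j ≠ a} → Bool,
        (boxI X μ (fun ω => h (ov S (E.symm (false, σ)) ω))) ^ 2
          ≤ ∏ b : Bool, boxI X μ (fun ω => h (ov (insert a S) (E.symm (b, σ)) ω)) := by
      intro σ
      have hcs := boxI_sq_le X μ a (fun ω => h (ov S (E.symm (false, σ)) ω))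
        (fun ω => hm _) (C := C) (fun ω x => hb _ x)
      have r : ∀ b : Bool, (fun ω => h (ov S (E.symm (false, σ)) (Function.update ω a b)))
          = (fun ω => h (ov (insert a S) (E.symm (b, σ)) ω)) := by
        intro b
        funext ω
        rw [ov_update S a ha, update_funSplitAt_symm]
      rw [r false, r true] at hcs
      rw [Fintype.prod_bool, mul_comm]
      exact hcs
    refine Finset.prod_le_prod (fun σ _ => ?_) (fun σ _ => ?_)
    · rw [key σ]; exact sq_nonneg _
    · rw [key σ]; exact key2 σ

lemma boxInt_nonneg [Nonempty V] (f : (∀ v, X v) → ℝ) (hm : Measurable f)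
    {C : ℝ} (hb : ∀ x, |f x| ≤ C) : 0 ≤ boxInt X μ f := by
  obtain ⟨v⟩ := (inferInstance : Nonempty V)
  rw [boxInt_eq_boxI]
  exact boxI_nonneg X μ v _ (fun _ => hm) (fun _ x => hb x) (fun ω b => rfl)

lemma abs_boxI_le_prod [Nonempty V] (h : (V → Bool) → (∀ v, X v) → ℝ)
    (hm : ∀ ω, Measurable (h ω)) {C : ℝ} (hb : ∀ ω x, |h ω x| ≤ C) :
    |boxI X μ h| ≤ ∏ τ : V → Bool, boxNorm X μ (h τ) := by
  classical
  have hN : Fintype.card (V → Bool) = 2 ^ Fintype.card V := by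
    rw [Fintype.card_fun, Fintype.card_bool]
  have hpow := gcs_aux X μ h hm hb Finset.univ
  have hprod : ∏ τ : V → Bool, boxI X μ (fun ω => h (ov Finset.univ τ ω))
      = ∏ τ : V → Bool, boxInt X μ (h τ) :=
    Finset.prod_congr rfl fun τ _ => by
      rw [boxInt_eq_boxI]
      exact congrArg (boxI X μ) (funext fun ω => congrArg h (ov_univ τ ω))
  rw [hprod, hN] at hpow
  have hbox : ∀ τ : V → Bool, 0 ≤ boxInt X μ (h τ) := fun τ =>
    boxInt_nonneg X μ (h τ) (hm τ) (hb τ)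
  have hNR : ((2 ^ Fintype.card V : ℕ) : ℝ) ≠ 0 := by positivity
  have hcast : ((2 ^ Fintype.card V : ℕ) : ℝ) = (2 : ℝ) ^ Fintype.card V := by push_cast; rfl
  have step : |boxI X μ h| = (|boxI X μ h| ^ (2 ^ Fintype.card V : ℕ))
      ^ ((1:ℝ) / (2 ^ Fintype.card V : ℕ)) := by
    rw [← Real.rpow_natCast |boxI X μ h| (2 ^ Fintype.card V), ← Real.rpow_mul (abs_nonneg _),
      mul_one_div, div_self hNR, Real.rpow_one]
  rw [step]
  calc (|boxI X μ h| ^ (2 ^ Fintype.card V : ℕ)) ^ ((1:ℝ) / (2 ^ Fintype.card V : ℕ))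
      ≤ (∏ τ : V → Bool, boxInt X μ (h τ)) ^ ((1:ℝ) / (2 ^ Fintype.card V : ℕ)) :=
        Real.rpow_le_rpow (by positivity) hpow (by positivity)
    _ = ∏ τ : V → Bool, (boxInt X μ (h τ)) ^ ((1:ℝ) / (2 ^ Fintype.card V : ℕ)) :=
        (Real.finset_prod_rpow _ _ (fun τ _ => hbox τ) _).symm
    _ = ∏ τ : V → Bool, boxNorm X μ (h τ) := by
        refine Finset.prod_congr rfl fun τ _ => ?_
        rw [boxNorm, hcast]

end Box

/-- `‖·‖_{□^V}` is a seminorm on bounded measurable functions: absolute homogeneity and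
the triangle inequality. -/
theorem boxNorm_seminorm (V : Type) [Fintype V] [DecidableEq V] [Nonempty V]
    (X : V → Type) [∀ v, MeasurableSpace (X v)]
    (μ : ∀ v, Measure (X v)) [∀ v, IsProbabilityMeasure (μ v)]
    (f g : (∀ v, X v) → ℝ)
    (hfb : ∃ C, ∀ x, |f x| ≤ C) (hfm : Measurable f)
    (hgb : ∃ C, ∀ x, |g x| ≤ C) (hgm : Measurable g) (c : ℝ) :
    boxNorm X μ (fun x => c * f x) = |c| * boxNorm X μ f ∧
    boxNorm X μ (fun x => f x + g x) ≤ boxNorm X μ f + boxNorm X μ g := by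
  classical
  obtain ⟨Cf, hCf⟩ := hfb
  obtain ⟨Cg, hCg⟩ := hgb
  have hn0 : Fintype.card V ≠ 0 := Fintype.card_ne_zero
  have heven : Even (2 ^ Fintype.card V) := Nat.even_pow.mpr ⟨even_two, hn0⟩
  have hcast : ((2 ^ Fintype.card V : ℕ) : ℝ) = (2 : ℝ) ^ Fintype.card V := by push_cast; rfl
  have hIf : 0 ≤ boxInt X μ f := boxInt_nonneg X μ f hfm hCf
  have hIg : 0 ≤ boxInt X μ g := boxInt_nonneg X μ g hgm hCg
  have hBf : 0 ≤ boxNorm X μ f := Real.rpow_nonneg hIf _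
  have hBg : 0 ≤ boxNorm X μ g := Real.rpow_nonneg hIg _
  constructor
  · -- homogeneity
    have hexp : boxInt X μ (fun x => c * f x)
        = c ^ (2 ^ Fintype.card V) * boxInt X μ f := by
      rw [boxInt, boxInt, ← MeasureTheory.integral_const_mul]
      congr 1
      funext x
      rw [Finset.prod_mul_distrib, Finset.prod_const, Finset.card_univ, Fintype.card_fun,
        Fintype.card_bool]
    rw [boxNorm, boxNorm, hexp, ← heven.pow_abs c,
      Real.mul_rpow (pow_nonneg (abs_nonneg c) _) hIf]
    congr 1
    rw [← Real.rpow_natCast |c| (2 ^ Fintype.card V), ← Real.rpow_mul (abs_nonneg c), hcast,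
      mul_one_div, div_self (by positivity), Real.rpow_one]
  · -- triangle inequality
    set B := boxNorm X μ f + boxNorm X μ g with hB
    have hBnn : 0 ≤ B := add_nonneg hBf hBg
    have hfam_m : ∀ (t : Finset (V → Bool)) (ω : V → Bool),
        Measurable (if ω ∈ t then f else g) := fun t ω => by
      by_cases hω : ω ∈ t <;> simp [hω, hfm, hgm]
    have hfam_b : ∀ (t : Finset (V → Bool)) (ω : V → Bool) (x : ∀ v, X v),
        |(if ω ∈ t then f else g) x| ≤ max Cf Cg := fun t ω x => by
      by_cases hω : ω ∈ t
      · simp only [hω, if_true]; exact (hCf x).trans (le_max_left _ _)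
      · simp only [hω, if_false]; exact (hCg x).trans (le_max_right _ _)
    have hfilter : ∀ t : Finset (V → Bool),
        Finset.univ.filter (fun ω => ω ∈ t) = t := by
      intro t; ext ω; simp
    have hfilter' : ∀ t : Finset (V → Bool),
        Finset.univ.filter (fun ω => ¬ ω ∈ t) = Finset.univ \ t := by
      intro t; ext ω; simp
    have hsum : boxInt X μ (fun x => f x + g x)
        = ∑ t ∈ (Finset.univ : Finset (V → Bool)).powerset,
            boxI X μ (fun ω => if ω ∈ t then f else g) := by
      rw [boxInt]
      have hin : ∀ x : (∀ p : V × Bool, X p.1),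
          (∏ ω : V → Bool, (fun x => f x + g x) (fun v => x (v, ω v)))
          = ∑ t ∈ (Finset.univ : Finset (V → Bool)).powerset,
              ∏ ω : V → Bool, (if ω ∈ t then f else g) (fun v => x (v, ω v)) := by
        intro x
        rw [Finset.prod_add]
        refine Finset.sum_congr rfl fun t ht => ?_
        rw [← Finset.prod_filter_mul_prod_filter_not Finset.univ (fun ω => ω ∈ t)]
        congr 1
        · rw [hfilter t]
          exact Finset.prod_congr rfl fun ω hω => by simp [hω]
        · rw [hfilter' t]
          refine Finset.prod_congr rfl fun ω hω => ?_
          have : ω ∉ t := (Finset.mem_sdiff.1 hω).2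
          simp [this]
      have hstep : (∫ x : ∀ p : V × Bool, X p.1,
          ∏ ω : V → Bool, (fun x => f x + g x) (fun v => x (v, ω v))
          ∂(Measure.pi fun p : V × Bool => μ p.1))
          = ∫ x : ∀ p : V × Bool, X p.1,
            ∑ t ∈ (Finset.univ : Finset (V → Bool)).powerset,
              ∏ ω : V → Bool, (if ω ∈ t then f else g) (fun v => x (v, ω v))
            ∂(Measure.pi fun p : V × Bool => μ p.1) := by
        congr 1
        funext x
        exact hin x
      rw [hstep, integral_finset_sum]
      · rfl
      · intro t _
        refine integrable_of_bdd (C := (max (max Cf Cg) 0) ^ Fintype.card (V → Bool))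
          ?_ ?_
        · have hmeas : Measurable (fun x : ∀ p : V × Bool, X p.1 =>
              ∏ ω : V → Bool, (if ω ∈ t then f else g) (fun v => x (v, ω v))) :=
            Finset.measurable_prod _ fun ω _ => (hfam_m t ω).comp
              (measurable_pi_lambda _ fun w => measurable_pi_apply _)
          exact hmeas.aestronglyMeasurable
        · intro x
          calc |∏ ω : V → Bool, (if ω ∈ t then f else g) (fun v => x (v, ω v))|
              ≤ ∏ _ω : V → Bool, (max (max Cf Cg) 0) := by
                rw [Finset.abs_prod]
                exact Finset.prod_le_prod (fun _ _ => abs_nonneg _)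
                  (fun ω _ => (hfam_b t ω _).trans (le_max_left _ _))
            _ = _ := by rw [Finset.prod_const, Finset.card_univ]
    have hterm : ∀ t ∈ (Finset.univ : Finset (V → Bool)).powerset,
        boxI X μ (fun ω => if ω ∈ t then f else g)
          ≤ (boxNorm X μ f) ^ t.card * (boxNorm X μ g) ^ (Finset.univ \ t).card := by
      intro t _
      have h1 := abs_boxI_le_prod X μ (fun ω => if ω ∈ t then f else g)
        (hfam_m t) (hfam_b t)
      refine (le_abs_self _).trans (h1.trans (le_of_eq ?_))
      calc ∏ τ : V → Bool, boxNorm X μ (if τ ∈ t then f else g)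
          = ∏ τ : V → Bool, (if τ ∈ t then boxNorm X μ f else boxNorm X μ g) :=
            Finset.prod_congr rfl fun τ _ => apply_ite (boxNorm X μ) _ _ _
        _ = (∏ τ ∈ Finset.univ.filter (fun τ => τ ∈ t), boxNorm X μ f)
            * ∏ τ ∈ Finset.univ.filter (fun τ => ¬ τ ∈ t), boxNorm X μ g :=
            Finset.prod_ite _ _
        _ = (boxNorm X μ f) ^ t.card * (boxNorm X μ g) ^ (Finset.univ \ t).card := by
            rw [hfilter t, hfilter' t, Finset.prod_const, Finset.prod_const]
    have hbinom : ∑ t ∈ (Finset.univ : Finset (V → Bool)).powerset,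
        (boxNorm X μ f) ^ t.card * (boxNorm X μ g) ^ (Finset.univ \ t).card
        = B ^ (2 ^ Fintype.card V) := by
      have hpa := Finset.prod_add (fun _ : V → Bool => boxNorm X μ f)
        (fun _ : V → Bool => boxNorm X μ g) Finset.univ
      simp only [Finset.prod_const] at hpa
      rw [Finset.card_univ, Fintype.card_fun, Fintype.card_bool] at hpa
      rw [← hpa]
    have hle : boxInt X μ (fun x => f x + g x) ≤ B ^ (2 ^ Fintype.card V) := by
      rw [hsum, ← hbinom]
      exact Finset.sum_le_sum hterm
    have hI0 : 0 ≤ boxInt X μ (fun x => f x + g x) :=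
      boxInt_nonneg X μ _ (hfm.add hgm) (C := Cf + Cg)
        (fun x => (abs_add_le _ _).trans (add_le_add (hCf x) (hCg x)))
    rw [boxNorm]
    calc (boxInt X μ (fun x => f x + g x)) ^ ((1:ℝ) / 2 ^ Fintype.card V)
        ≤ (B ^ (2 ^ Fintype.card V : ℕ)) ^ ((1:ℝ) / 2 ^ Fintype.card V) :=
          Real.rpow_le_rpow hI0 hle (by positivity)
      _ = B := by
          rw [← Real.rpow_natCast B (2 ^ Fintype.card V), ← Real.rpow_mul hBnn, hcast,
            mul_one_div, div_self (by positivity), Real.rpow_one]
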